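/- For real numbers 0 < x < y, the modified Bessel functions of the first kind satisfy I_1(x)/I_1(y) < e^{x-y} · (y/x). -/

import Mathlib

open Real

/-- The modified Bessel function of the first kind of order one:
`I₁(x) = (x/2) ∑_{k ≥ 0} (x²/4)^k / (k! Γ(k+2))`. -/
noncomputable def besselI1 (x : ℝ) : ℝ :=
  (x / 2) * ∑' k : ℕ, (x ^ 2 / 4) ^ k / (Nat.factorial k * Real.Gamma (k + 2))

noncomputable def bA (t : ℝ) (k : ℕ) : ℝ := (t / 2) ^ k / (Nat.factorial k : ℝ)

lemma abs_bA (t : ℝ) (k : ℕ) : |bA t k| = bA |t| k := by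
  simp [bA, abs_div, abs_pow, Nat.abs_cast]

lemma bA_nonneg {t : ℝ} (ht : 0 ≤ t) (k : ℕ) : 0 ≤ bA t k := by
  unfold bA; positivity

lemma bA_mono {t R : ℝ} (ht : 0 ≤ t) (h : t ≤ R) (k : ℕ) : bA t k ≤ bA R k := by
  unfold bA
  gcongr

lemma bA_sq_le (t : ℝ) (k : ℕ) : bA t k ^ 2 ≤ ((t/2)^2) ^ k / (Nat.factorial k : ℝ) := by
  have h1 : bA t k ^ 2 = ((t/2)^2) ^ k / ((Nat.factorial k : ℝ) * (Nat.factorial k : ℝ)) := by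
    unfold bA
    rw [div_pow, ← pow_mul, ← pow_mul, Nat.mul_comm, sq]
  rw [h1]
  gcongr
  exact_mod_cast Nat.le_mul_of_pos_left _ (Nat.factorial_pos k)

lemma summable_bA_sq (t : ℝ) : Summable (fun k => bA t k ^ 2) :=
  Summable.of_nonneg_of_le (fun k => sq_nonneg _) (fun k => bA_sq_le t k)
    (Real.summable_pow_div_factorial ((t/2)^2))

lemma summable_bA_mul (t : ℝ) : Summable (fun k => bA t k * bA t (k + 1)) := by
  rw [← summable_abs_iff]
  refine Summable.of_nonneg_of_le (fun k => abs_nonneg _) (fun k => ?_)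
    (((Real.summable_pow_div_factorial ((|t|/2)^2)).mul_left (|t|/2)))
  rw [abs_mul, abs_bA, abs_bA]
  calc bA |t| k * bA |t| (k+1) ≤ bA |t| k * ((|t|/2)^(k+1)) := by
        apply mul_le_mul_of_nonneg_left _ (bA_nonneg (abs_nonneg t) k)
        unfold bA
        apply div_le_self (by positivity)
        exact_mod_cast Nat.one_le_iff_ne_zero.2 (Nat.factorial_pos _).ne'
    _ = (|t|/2) * (((|t|/2)^2) ^ k / (Nat.factorial k : ℝ)) := by
        unfold bA
        rw [div_mul_eq_mul_div, ← pow_add, ← pow_mul]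
        rw [show k + (k+1) = 2*k+1 by ring, pow_succ]
        ring

lemma besselI1_eq (t : ℝ) : besselI1 t = ∑' k : ℕ, bA t k * bA t (k + 1) := by
  unfold besselI1
  rw [← tsum_mul_left]
  congr 1
  funext k
  have hG : Real.Gamma ((k : ℝ) + 2) = (Nat.factorial (k+1) : ℝ) := by
    rw [show ((k : ℝ) + 2) = ((k+1 : ℕ) : ℝ) + 1 by push_cast; ring,
      Real.Gamma_nat_eq_factorial]
  rw [hG]
  unfold bA
  have h2 : (t^2/4) ^ k = (t/2) ^ (2*k) := by
    rw [pow_mul]; congr 1; ring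
  rw [h2]
  conv_rhs => rw [div_mul_div_comm, ← pow_add, show k + (k+1) = 2*k+1 by ring, pow_succ]
  have hk : (Nat.factorial k : ℝ) ≠ 0 := by exact_mod_cast (Nat.factorial_pos k).ne'
  have hk1 : (Nat.factorial (k+1) : ℝ) ≠ 0 := by exact_mod_cast (Nat.factorial_pos (k+1)).ne'
  field_simp

/-- `I₀` as a sum of squares. -/
noncomputable def bI0 (t : ℝ) : ℝ := ∑' k : ℕ, bA t k ^ 2

lemma besselI1_lt_bI0 (t : ℝ) : besselI1 t < bI0 t := by
  have hs0 := summable_bA_sq t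
  have hs1 := summable_bA_mul t
  have hshift : Summable (fun k => bA t (k+1) ^ 2) :=
    (summable_nat_add_iff (f := fun k => bA t k ^ 2) 1).2 hs0
  have h0 : bA t 0 = 1 := by simp [bA]
  have hzero := Summable.tsum_eq_zero_add hs0
  have h2 : ∑' k, bA t (k+1) ^ 2 = bI0 t - 1 := by
    rw [bI0, hzero, h0]
    ring
  have h1 : besselI1 t ≤ bI0 t - 1/2 := by
    rw [besselI1_eq]
    calc ∑' k, bA t k * bA t (k+1) ≤ ∑' k, (bA t k ^ 2 + bA t (k+1) ^ 2)/2 := by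
          apply Summable.tsum_le_tsum _ hs1 ((hs0.add hshift).div_const 2)
          intro k
          nlinarith [sq_nonneg (bA t k - bA t (k+1))]
      _ = (bI0 t + (bI0 t - 1))/2 := by
          rw [tsum_div_const, Summable.tsum_add hs0 hshift, h2]
          rfl
      _ = bI0 t - 1/2 := by ring
  linarith

lemma besselI1_pos {t : ℝ} (ht : 0 < t) : 0 < besselI1 t := by
  rw [besselI1_eq]
  apply Summable.tsum_pos (summable_bA_mul t)
    (fun k => mul_nonneg (bA_nonneg ht.le k) (bA_nonneg ht.le _)) 0
  have : bA t 0 * bA t 1 = t/2 := by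
    simp [bA, Nat.factorial]
  rw [this]
  linarith

noncomputable def bC (k : ℕ) : ℝ :=
  2 * 4 ^ k * (Nat.factorial k : ℝ) * (Nat.factorial (k+1) : ℝ)

lemma bC_pos (k : ℕ) : 0 < bC k := by
  unfold bC
  have h1 : (0:ℝ) < (Nat.factorial k : ℝ) := by exact_mod_cast Nat.factorial_pos k
  have h2 : (0:ℝ) < (Nat.factorial (k+1) : ℝ) := by exact_mod_cast Nat.factorial_pos (k+1)
  positivity

noncomputable def bf (k : ℕ) (t : ℝ) : ℝ := Real.exp (-t) * t ^ (2*k+2) / bC k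

noncomputable def bf' (k : ℕ) (t : ℝ) : ℝ :=
  Real.exp (-t) * ((2*(k:ℝ)+2) * t ^ (2*k+1) - t ^ (2*k+2)) / bC k

lemma bA_mul_eq (t : ℝ) (k : ℕ) : bA t k * bA t (k+1) = t ^ (2*k+1) / bC k := by
  unfold bA bC
  rw [div_mul_div_comm, ← pow_add, show k + (k+1) = 2*k+1 by ring, div_pow]
  rw [div_div]
  congr 1
  have h4 : ((4:ℝ)) ^ k = 2 ^ (2*k) := by
    rw [show (4:ℝ) = 2^2 by norm_num, ← pow_mul]
  rw [h4, pow_succ, pow_mul]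
  ring

lemma bA_sq_eq (t : ℝ) (k : ℕ) : (2*(k:ℝ)+2) * t ^ (2*k+1) / bC k = t * bA t k ^ 2 := by
  unfold bA bC
  have hk : (Nat.factorial k : ℝ) ≠ 0 := by exact_mod_cast (Nat.factorial_pos k).ne'
  have hk1 : (Nat.factorial (k+1) : ℝ) ≠ 0 := by exact_mod_cast (Nat.factorial_pos (k+1)).ne'
  have hfs : (Nat.factorial (k+1) : ℝ) = ((k:ℝ)+1) * (Nat.factorial k : ℝ) := by
    rw [Nat.factorial_succ]; push_cast; ring
  rw [hfs, div_pow, ← pow_mul]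
  have h4 : ((4:ℝ)) ^ k = 2 ^ (2*k) := by
    rw [show (4:ℝ) = 2^2 by norm_num, ← pow_mul]
  rw [h4]
  field_simp
  rw [pow_succ]
  have h5 : (1/2:ℝ)^(2*k) * 2^(2*k) = 1 := by rw [← mul_pow]; norm_num
  linear_combination (-(t * t ^ (2*k))) * h5

lemma bf_eq (k : ℕ) (t : ℝ) : bf k t = Real.exp (-t) * (t * (bA t k * bA t (k+1))) := by
  unfold bf
  rw [bA_mul_eq, show 2*k+2 = (2*k+1)+1 by ring, pow_succ]
  ring

lemma bf'_eq (k : ℕ) (t : ℝ) :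
    bf' k t = Real.exp (-t) * (t * (bA t k ^ 2 - bA t k * bA t (k+1))) := by
  unfold bf'
  conv_rhs => rw [mul_sub, mul_sub, ← bA_sq_eq t k, bA_mul_eq t k]
  rw [show 2*k+2 = (2*k+1)+1 by ring, pow_succ]
  ring

lemma bf_hasDerivAt (k : ℕ) (t : ℝ) : HasDerivAt (bf k) (bf' k t) t := by
  have h1 : HasDerivAt (fun s : ℝ => Real.exp (-s)) (Real.exp (-t) * (-1)) t :=
    (hasDerivAt_neg t).exp
  have h2 : HasDerivAt (fun s : ℝ => s ^ (2*k+2)) ((2*(k:ℝ)+2) * t ^ (2*k+1)) t := by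
    have h := hasDerivAt_pow (2*k+2) t
    push_cast at h
    convert h using 2
  have h3 := (h1.mul h2).div_const (bC k)
  exact h3.congr_deriv (by unfold bf'; ring)

lemma sum_bf'_eq (t : ℝ) :
    ∑' k, bf' k t = Real.exp (-t) * (t * (bI0 t - besselI1 t)) := by
  simp only [bf'_eq]
  rw [tsum_mul_left, tsum_mul_left, Summable.tsum_sub (summable_bA_sq t) (summable_bA_mul t),
    besselI1_eq, bI0]

/-- **Ratio bound for modified Bessel functions:** for `0 < x < y`,
`I₁(x)/I₁(y) < e^{x-y} · (y/x)`. -/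
theorem besselI1_ratio_lt (x y : ℝ) (hx : 0 < x) (hxy : x < y) :
    besselI1 x / besselI1 y < Real.exp (x - y) * (y / x) := by
  have hy : 0 < y := hx.trans hxy
  set R : ℝ := y + 1 with hRdef
  have hR : 0 < R := by linarith
  set F : ℝ → ℝ := fun s => ∑' k, bf k s with hF
  set u : ℕ → ℝ := fun k => Real.exp R * R * (bA R k ^ 2 + bA R k * bA R (k+1)) with hu
  have hu_sum : Summable u :=
    ((summable_bA_sq R).add (summable_bA_mul R)).mul_left (Real.exp R * R)
  have hbound : ∀ (n : ℕ), ∀ z ∈ Set.Ioo (-R) R, ‖bf' n z‖ ≤ u n := by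
    intro n z hz
    have hzR : |z| ≤ R := by
      rw [abs_le]
      exact ⟨hz.1.le, hz.2.le⟩
    rw [bf'_eq, Real.norm_eq_abs, abs_mul, abs_mul, Real.abs_exp, hu]
    have hE : Real.exp (-z) ≤ Real.exp R := by
      apply Real.exp_le_exp.2
      have := neg_le_of_abs_le hzR
      linarith
    have habs : |bA z n ^ 2 - bA z n * bA z (n+1)| ≤ bA R n ^ 2 + bA R n * bA R (n+1) := by
      refine (abs_sub _ _).trans ?_
      have h1 : |bA z n ^ 2| ≤ bA R n ^ 2 := by
        rw [abs_pow, abs_bA]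
        have := bA_mono (abs_nonneg z) hzR n
        have h0 := bA_nonneg (abs_nonneg z) n
        nlinarith
      have h2 : |bA z n * bA z (n+1)| ≤ bA R n * bA R (n+1) := by
        rw [abs_mul, abs_bA, abs_bA]
        exact mul_le_mul (bA_mono (abs_nonneg z) hzR n) (bA_mono (abs_nonneg z) hzR (n+1))
          (bA_nonneg (abs_nonneg z) (n+1)) (bA_nonneg hR.le n)
      linarith
    calc Real.exp (-z) * (|z| * |bA z n ^ 2 - bA z n * bA z (n+1)|)
        ≤ Real.exp R * (R * (bA R n ^ 2 + bA R n * bA R (n+1))) := by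
          apply mul_le_mul hE _ (mul_nonneg (abs_nonneg z) (abs_nonneg _)) (Real.exp_pos R).le
          exact mul_le_mul hzR habs (abs_nonneg _)
            hR.le
      _ = Real.exp R * R * (bA R n ^ 2 + bA R n * bA R (n+1)) := by ring
  have hmem0 : (0:ℝ) ∈ Set.Ioo (-R) R := by
    constructor
    · simp only [neg_lt, neg_zero]
      linarith
    · linarith
  have hsum0 : Summable (fun n => bf n 0) := by
    have : (fun n : ℕ => bf n 0) = (fun n => 0) := by
      funext n
      simp [bf]
    rw [this]
    exact summable_zero
  have hder : ∀ s ∈ Set.Ioo (-R) R, HasDerivAt F (∑' k, bf' k s) s := by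
    intro s hs
    exact hasDerivAt_tsum_of_isPreconnected hu_sum isOpen_Ioo
      (convex_Ioo (-R) R).isPreconnected
      (fun n z _ => bf_hasDerivAt n z) (fun n z hz => hbound n z hz) hmem0 hsum0 hs
  have hFeq : ∀ s : ℝ, F s = s * Real.exp (-s) * besselI1 s := by
    intro s
    rw [hF]
    simp only [bf_eq]
    rw [tsum_mul_left, tsum_mul_left, ← besselI1_eq]
    ring
  have hsub : Set.Icc (0:ℝ) y ⊆ Set.Ioo (-R) R := by
    intro s hs
    constructor
    · linarith [hs.1]
    · have := hs.2
      linarith [hRdef]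
  have hcont : ContinuousOn F (Set.Icc 0 y) := fun s hs =>
    (hder s (hsub hs)).continuousAt.continuousWithinAt
  have hpos : ∀ s ∈ interior (Set.Icc (0:ℝ) y), 0 < deriv F s := by
    rw [interior_Icc]
    intro s hs
    rw [(hder s (hsub (Set.mem_Icc_of_Ioo hs))).deriv, sum_bf'_eq]
    have h1 := besselI1_lt_bI0 s
    have h2 : 0 < s := hs.1
    have h3 : 0 < bI0 s - besselI1 s := by linarith
    have h4 := Real.exp_pos (-s)
    exact mul_pos h4 (mul_pos h2 h3)
  have hmono := strictMonoOn_of_deriv_pos (convex_Icc 0 y) hcont hpos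
  have hFlt : F x < F y := hmono ⟨hx.le, hxy.le⟩ ⟨hy.le, le_refl y⟩ hxy
  rw [hFeq, hFeq] at hFlt
  have hIx := besselI1_pos hx
  have hIy := besselI1_pos hy
  have hkey : besselI1 x * x * Real.exp y < besselI1 y * y * Real.exp x := by
    rw [Real.exp_neg, Real.exp_neg] at hFlt
    have hex := Real.exp_pos x
    have hey := Real.exp_pos y
    have h := mul_lt_mul_of_pos_right hFlt (mul_pos hex hey)
    have e1 : x * (Real.exp x)⁻¹ * besselI1 x * (Real.exp x * Real.exp y)
        = besselI1 x * x * Real.exp y := by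
      field_simp
    have e2 : y * (Real.exp y)⁻¹ * besselI1 y * (Real.exp x * Real.exp y)
        = besselI1 y * y * Real.exp x := by
      field_simp
    rw [e1, e2] at h
    exact h
  have hrhs : Real.exp (x - y) * (y / x) = (Real.exp x * y) / (Real.exp y * x) := by
    rw [Real.exp_sub, div_mul_div_comm]
  rw [hrhs, div_lt_div_iff₀ hIy (by positivity)]
  nlinarith [hkey]
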